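/- Let A be a symmetric 2×2 matrix satisfying the cyclic conditions with A₁₁ ≠ 0. Then the function ψ(q) = det(A(q))/A₁₁(q₂) = A₂₂ - A₁₂²/A₁₁ is constant along the characteristic curves q̇₁ = A₁₂(q), q̇₂ = -A₁₁(q); i.e., A₁₂·∂₁ψ - A₁₁·∂₂ψ = 0 identically. -/

import Mathlib

/-- Partial derivative with respect to the first variable. -/
noncomputable def pr (f : ℝ → ℝ → ℝ) (r w : ℝ) : ℝ := deriv (fun x => f x w) r

/-- Partial derivative with respect to the second variable. -/
noncomputable def pw (f : ℝ → ℝ → ℝ) (r w : ℝ) : ℝ := deriv (fun y => f r y) w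

lemma hquad (q2 q1 q0 x : ℝ) :
    HasDerivAt (fun t : ℝ => q2 * t ^ 2 + q1 * t + q0) (2 * q2 * x + q1) x := by
  have h := (((hasDerivAt_pow 2 x).const_mul q2).add
      ((hasDerivAt_id x).const_mul q1)).add_const q0
  exact h.congr_deriv (by push_cast; ring)

/-- for a symmetric `2×2` cyclic matrix `A` with `A₁₁ ≠ 0`, the function
`ψ = det(A)/A₁₁ = A₂₂ - A₁₂²/A₁₁` is constant along the characteristic curves
`q̇₁ = A₁₂`, `q̇₂ = -A₁₁`, i.e. `A₁₂·∂₁ψ - A₁₁·∂₂ψ = 0` identically. -/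
theorem stmt_16 (a b c al be ga : ℝ)
    (A11 : ℝ → ℝ) (A12 : ℝ → ℝ → ℝ) (A22 : ℝ → ℝ)
    (hA11 : A11 = fun w => a * w ^ 2 + b * w + al)
    (hA12 : A12 = fun r w => (-2 * a * r * w - b * r - c * w + be) / 2)
    (hA22 : A22 = fun r => a * r ^ 2 + c * r + ga)
    (hA11ne : ∀ w, A11 w ≠ 0)
    (ψ : ℝ → ℝ → ℝ)
    (hψ : ψ = fun r w => A22 r - A12 r w ^ 2 / A11 w) :
    ∀ r w, A12 r w * pr ψ r w - A11 w * pw ψ r w = 0 := by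
  subst hA11 hA12 hA22 hψ
  intro r w
  have hKne : a * w ^ 2 + b * w + al ≠ 0 := hA11ne w
  -- pr : derivative in r
  have hgr : HasDerivAt (fun x : ℝ => 0 * x ^ 2 + ((-2 * a * w - b) / 2) * x + ((-c * w + be) / 2))
      (2 * 0 * r + (-2 * a * w - b) / 2) r := hquad _ _ _ r
  have hfr : HasDerivAt (fun x : ℝ =>
      (a * x ^ 2 + c * x + ga) -
        (0 * x ^ 2 + ((-2 * a * w - b) / 2) * x + ((-c * w + be) / 2)) ^ 2 /
          (a * w ^ 2 + b * w + al))
      ((2 * a * r + c) -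
        (2 * (0 * r ^ 2 + ((-2 * a * w - b) / 2) * r + ((-c * w + be) / 2)) ^ 1 *
          (2 * 0 * r + (-2 * a * w - b) / 2)) / (a * w ^ 2 + b * w + al)) r :=
    (hquad a c ga r).sub ((hgr.pow 2).div_const _)
  have hpr : pr (fun r w => (a * r ^ 2 + c * r + ga) -
      ((-2 * a * r * w - b * r - c * w + be) / 2) ^ 2 / (a * w ^ 2 + b * w + al)) r w
      = (2 * a * r + c) -
        (2 * (0 * r ^ 2 + ((-2 * a * w - b) / 2) * r + ((-c * w + be) / 2)) ^ 1 *
          (2 * 0 * r + (-2 * a * w - b) / 2)) / (a * w ^ 2 + b * w + al) := by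
    unfold pr
    rw [show (fun x : ℝ => (a * x ^ 2 + c * x + ga) -
        ((-2 * a * x * w - b * x - c * w + be) / 2) ^ 2 / (a * w ^ 2 + b * w + al)) =
        (fun x : ℝ => (a * x ^ 2 + c * x + ga) -
        (0 * x ^ 2 + ((-2 * a * w - b) / 2) * x + ((-c * w + be) / 2)) ^ 2 /
          (a * w ^ 2 + b * w + al)) from funext fun x => by ring]
    exact hfr.deriv
  -- pw : derivative in w
  have hgw : HasDerivAt (fun y : ℝ => 0 * y ^ 2 + ((-2 * a * r - c) / 2) * y + ((-b * r + be) / 2))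
      (2 * 0 * w + (-2 * a * r - c) / 2) w := hquad _ _ _ w
  have hh : HasDerivAt (fun y : ℝ => a * y ^ 2 + b * y + al) (2 * a * w + b) w := hquad _ _ _ w
  have hfw : HasDerivAt (fun y : ℝ =>
      (a * r ^ 2 + c * r + ga) -
        (0 * y ^ 2 + ((-2 * a * r - c) / 2) * y + ((-b * r + be) / 2)) ^ 2 /
          (a * y ^ 2 + b * y + al))
      (0 - ((2 * (0 * w ^ 2 + ((-2 * a * r - c) / 2) * w + ((-b * r + be) / 2)) ^ 1 *
          (2 * 0 * w + (-2 * a * r - c) / 2)) * (a * w ^ 2 + b * w + al) -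
          (0 * w ^ 2 + ((-2 * a * r - c) / 2) * w + ((-b * r + be) / 2)) ^ 2 * (2 * a * w + b)) /
          (a * w ^ 2 + b * w + al) ^ 2) w :=
    (hasDerivAt_const w _).sub ((hgw.pow 2).div hh hKne)
  have hpw : pw (fun r w => (a * r ^ 2 + c * r + ga) -
      ((-2 * a * r * w - b * r - c * w + be) / 2) ^ 2 / (a * w ^ 2 + b * w + al)) r w
      = 0 - ((2 * (0 * w ^ 2 + ((-2 * a * r - c) / 2) * w + ((-b * r + be) / 2)) ^ 1 *
          (2 * 0 * w + (-2 * a * r - c) / 2)) * (a * w ^ 2 + b * w + al) -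
          (0 * w ^ 2 + ((-2 * a * r - c) / 2) * w + ((-b * r + be) / 2)) ^ 2 * (2 * a * w + b)) /
          (a * w ^ 2 + b * w + al) ^ 2 := by
    unfold pw
    rw [show (fun y : ℝ => (a * r ^ 2 + c * r + ga) -
        ((-2 * a * r * y - b * r - c * y + be) / 2) ^ 2 / (a * y ^ 2 + b * y + al)) =
        (fun y : ℝ => (a * r ^ 2 + c * r + ga) -
        (0 * y ^ 2 + ((-2 * a * r - c) / 2) * y + ((-b * r + be) / 2)) ^ 2 /
          (a * y ^ 2 + b * y + al)) from funext fun y => by ring]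
    exact hfw.deriv
  rw [hpr, hpw]
  beta_reduce
  have hK' : w * (a * w + b) + al ≠ 0 := by
    rw [show w * (a * w + b) + al = a * w ^ 2 + b * w + al by ring]; exact hKne
  field_simp
  ring
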